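/- arXiv:1612.07960 — 3 statements merged into one kernel-verified Lean document; each statement's English description precedes it below -/
import Mathlib

section
/- Let G be a finite abelian group with subgroups G₁, G₂ of equal order D satisfying G₁ + G₂ = G, and let F: G₁ × G₂ → ℂˣ be a perfect pairing. Define f: G × G → ℂ by f(μ,ν) = D⁻¹·F(μ,ν) if μ ∈ G₁ and ν ∈ G₂, and 0 otherwise; define m(μ,ν) = Σ_{μ',ν' ∈ G} f(μ−μ',ν−ν')·f(ν',μ'); let Sym(F)((μ₁,μ₂),(ν₁,ν₂)) = F(μ₁,ν₂)·F(ν₁,μ₂); let (G₁×G₂)_λ := {(λ₁,λ₂) ∈ G₁×G₂ : λ₁+λ₂ = λ}; let Rad := {x ∈ G₁×G₂ : Sym(F)(x,y) = 1 for all y ∈ (G₁×G₂)₀}; let Rad_λ := Rad ∩ (G₁×G₂)_λ and Rad₀ := Rad ∩ (G₁×G₂)₀. Then for all μ, ν ∈ G: if Rad_μ and Rad_ν are both nonempty, then for every choice of μ̃ ∈ Rad_μ and ν̃ ∈ Rad_ν one has m(μ,ν) = (|G₁ ∩ G₂|·|Rad₀|/D²)·Sym(F)(μ̃,ν̃) (in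 particular the value Sym(F)(μ̃,ν̃) is independent of the choices); and if Rad_μ = ∅ or Rad_ν = ∅, then m(μ,ν) = 0. -/
open Finset

/-- The symmetrization `Sym(F)` of a pairing. -/
def SymPair {G : Type*} (F : G → G → ℂˣ) (p q : G × G) : ℂˣ :=
  F p.1 q.2 * F q.1 p.2

/-- The fiber `(G₁×G₂)_λ`. -/
def fiberSet {G : Type*} [AddCommGroup G] (G₁ G₂ : AddSubgroup G) (lam : G) :
    Set (G × G) :=
  {p | p.1 ∈ G₁ ∧ p.2 ∈ G₂ ∧ p.1 + p.2 = lam}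

/-- The radical `Rad` of `Sym(F)` against the fiber over `0`. -/
def radSet {G : Type*} [AddCommGroup G] (G₁ G₂ : AddSubgroup G)
    (F : G → G → ℂˣ) : Set (G × G) :=
  {p | p.1 ∈ G₁ ∧ p.2 ∈ G₂ ∧
    ∀ q ∈ fiberSet G₁ G₂ (0 : G), SymPair F p q = 1}

section Aux

variable {G : Type*} [AddCommGroup G] [Fintype G] [DecidableEq G]
  (G₁ G₂ : AddSubgroup G) (F : G → G → ℂˣ)

open Classical in
noncomputable def fibF (lam : G) : Finset (G × G) :=
  univ.filter (fun p => p ∈ fiberSet G₁ G₂ lam)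

open Classical in
noncomputable def radF (lam : G) : Finset (G × G) :=
  univ.filter (fun p => p ∈ radSet G₁ G₂ F ∩ fiberSet G₁ G₂ lam)

lemma mem_fibF {lam : G} {p : G × G} :
    p ∈ fibF G₁ G₂ lam ↔ p.1 ∈ G₁ ∧ p.2 ∈ G₂ ∧ p.1 + p.2 = lam := by
  simp only [fibF, Finset.mem_filter, Finset.mem_univ, true_and]
  rfl

lemma mem_radF {lam : G} {p : G × G} :
    p ∈ radF G₁ G₂ F lam ↔
      p ∈ radSet G₁ G₂ F ∩ fiberSet G₁ G₂ lam := by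
  simp [radF]

lemma symPair_comm (p q : G × G) : SymPair F p q = SymPair F q p :=
  mul_comm _ _

lemma symPair_add_left
    (hF1 : ∀ μ μ' ν : G, μ ∈ G₁ → μ' ∈ G₁ → ν ∈ G₂ → F (μ + μ') ν = F μ ν * F μ' ν)
    (hF2 : ∀ μ ν ν' : G, μ ∈ G₁ → ν ∈ G₂ → ν' ∈ G₂ → F μ (ν + ν') = F μ ν * F μ ν')
    {p p' q : G × G} (hp1 : p.1 ∈ G₁) (hp2 : p.2 ∈ G₂)
    (hp'1 : p'.1 ∈ G₁) (hp'2 : p'.2 ∈ G₂) (hq1 : q.1 ∈ G₁) (hq2 : q.2 ∈ G₂) :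
    SymPair F (p + p') q = SymPair F p q * SymPair F p' q := by
  show F (p.1 + p'.1) q.2 * F q.1 (p.2 + p'.2) = _
  rw [hF1 _ _ _ hp1 hp'1 hq2, hF2 _ _ _ hq1 hp2 hp'2]
  exact mul_mul_mul_comm _ _ _ _

lemma symPair_add_right
    (hF1 : ∀ μ μ' ν : G, μ ∈ G₁ → μ' ∈ G₁ → ν ∈ G₂ → F (μ + μ') ν = F μ ν * F μ' ν)
    (hF2 : ∀ μ ν ν' : G, μ ∈ G₁ → ν ∈ G₂ → ν' ∈ G₂ → F μ (ν + ν') = F μ ν * F μ ν')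
    {p q q' : G × G} (hp1 : p.1 ∈ G₁) (hp2 : p.2 ∈ G₂)
    (hq1 : q.1 ∈ G₁) (hq2 : q.2 ∈ G₂) (hq'1 : q'.1 ∈ G₁) (hq'2 : q'.2 ∈ G₂) :
    SymPair F p (q + q') = SymPair F p q * SymPair F p q' := by
  rw [symPair_comm, symPair_comm F p q, symPair_comm F p q']
  exact symPair_add_left G₁ G₂ F hF1 hF2 hq1 hq2 hq'1 hq'2 hp1 hp2

lemma char_sum
    (hF1 : ∀ μ μ' ν : G, μ ∈ G₁ → μ' ∈ G₁ → ν ∈ G₂ → F (μ + μ') ν = F μ ν * F μ' ν)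
    (hF2 : ∀ μ ν ν' : G, μ ∈ G₁ → ν ∈ G₂ → ν' ∈ G₂ → F μ (ν + ν') = F μ ν * F μ ν')
    {q : G × G} (hq1 : q.1 ∈ G₁) (hq2 : q.2 ∈ G₂) :
    (∑ p ∈ fibF G₁ G₂ (0:G), (SymPair F p q : ℂ)) =
      if ∀ p ∈ fibF G₁ G₂ (0:G), SymPair F p q = 1
      then ((fibF G₁ G₂ (0:G)).card : ℂ) else 0 := by
  classical
  split_ifs with h
  · rw [Finset.sum_congr rfl (fun p hp => by rw [h p hp, Units.val_one])]
    simp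
  · push_neg at h
    obtain ⟨z, hz, hz1⟩ := h
    obtain ⟨hz1', hz2', hzs⟩ := (mem_fibF G₁ G₂).mp hz
    have key : (SymPair F z q : ℂ) * ∑ p ∈ fibF G₁ G₂ (0:G), (SymPair F p q : ℂ)
        = ∑ p ∈ fibF G₁ G₂ (0:G), (SymPair F p q : ℂ) := by
      rw [Finset.mul_sum]
      refine Finset.sum_equiv (Equiv.addLeft z) ?_ ?_
      · intro p
        simp only [mem_fibF, Equiv.coe_addLeft, Prod.fst_add, Prod.snd_add]
        constructor
        · rintro ⟨h1, h2, h3⟩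
          exact ⟨add_mem hz1' h1, add_mem hz2' h2, by
            have : z.1 + p.1 + (z.2 + p.2) = (z.1 + z.2) + (p.1 + p.2) := by abel
            rw [this, hzs, h3, add_zero]⟩
        · rintro ⟨h1, h2, h3⟩
          have e1 : p.1 = (z.1 + p.1) - z.1 := by abel
          have e2 : p.2 = (z.2 + p.2) - z.2 := by abel
          refine ⟨e1 ▸ sub_mem h1 hz1', e2 ▸ sub_mem h2 hz2', ?_⟩
          have : p.1 + p.2 = (z.1 + p.1 + (z.2 + p.2)) - (z.1 + z.2) := by abel
          rw [this, h3, hzs, sub_zero]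
      · intro p hp
        obtain ⟨h1, h2, _⟩ := (mem_fibF G₁ G₂).mp hp
        rw [show (Equiv.addLeft z) p = z + p from rfl,
          symPair_add_left G₁ G₂ F hF1 hF2 hz1' hz2' h1 h2 hq1 hq2]
        push_cast
        ring
    have hne : (SymPair F z q : ℂ) ≠ 1 := by
      intro hc
      exact hz1 (Units.ext hc)
    have key2 : ((SymPair F z q : ℂ) - 1) *
        ∑ p ∈ fibF G₁ G₂ (0:G), (SymPair F p q : ℂ) = 0 := by
      rw [sub_mul, one_mul, key, sub_self]
    rcases mul_eq_zero.mp key2 with h' | h'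
    · exact absurd (sub_eq_zero.mp h') hne
    · exact h'

lemma radF_eq
    {lam : G} {p : G × G} :
    p ∈ radF G₁ G₂ F lam ↔
      p ∈ fibF G₁ G₂ lam ∧ ∀ q ∈ fibF G₁ G₂ (0:G), SymPair F q p = 1 := by
  simp only [mem_radF, Set.mem_inter_iff, radSet, fiberSet, Set.mem_setOf_eq, mem_fibF]
  constructor
  · rintro ⟨⟨h1, h2, hc⟩, h1', h2', h3⟩
    refine ⟨⟨h1, h2, h3⟩, fun q hq => ?_⟩
    rw [symPair_comm]
    exact hc q hq
  · rintro ⟨⟨h1, h2, h3⟩, hc⟩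
    refine ⟨⟨h1, h2, fun q hq => ?_⟩, h1, h2, h3⟩
    rw [symPair_comm]
    exact hc q hq

lemma total_eq
    (hF1 : ∀ μ μ' ν : G, μ ∈ G₁ → μ' ∈ G₁ → ν ∈ G₂ → F (μ + μ') ν = F μ ν * F μ' ν)
    (hF2 : ∀ μ ν ν' : G, μ ∈ G₁ → ν ∈ G₂ → ν' ∈ G₂ → F μ (ν + ν') = F μ ν * F μ ν')
    {μ : G} (ν : G) {x₀ : G × G} (hx₀ : x₀ ∈ fibF G₁ G₂ μ) :
    (∑ x ∈ fibF G₁ G₂ μ, ∑ y ∈ fibF G₁ G₂ ν, (SymPair F x y : ℂ)) =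
      ((fibF G₁ G₂ (0:G)).card : ℂ) *
        ∑ y ∈ radF G₁ G₂ F ν, (SymPair F x₀ y : ℂ) := by
  classical
  obtain ⟨hx1, hx2, hxs⟩ := (mem_fibF G₁ G₂).mp hx₀
  rw [Finset.sum_comm]
  have step1 : ∀ y ∈ fibF G₁ G₂ ν,
      (∑ x ∈ fibF G₁ G₂ μ, (SymPair F x y : ℂ)) =
      (if ∀ p ∈ fibF G₁ G₂ (0:G), SymPair F p y = 1
       then ((fibF G₁ G₂ (0:G)).card : ℂ) * (SymPair F x₀ y : ℂ) else 0) := by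
    intro y hy
    obtain ⟨hy1, hy2, hys⟩ := (mem_fibF G₁ G₂).mp hy
    have reix : (∑ x ∈ fibF G₁ G₂ μ, (SymPair F x y : ℂ)) =
        ∑ p ∈ fibF G₁ G₂ (0:G), (SymPair F x₀ y : ℂ) * (SymPair F p y : ℂ) := by
      refine (Finset.sum_equiv (Equiv.addLeft x₀) ?_ ?_).symm
      · intro p
        simp only [mem_fibF, Equiv.coe_addLeft, Prod.fst_add, Prod.snd_add]
        constructor
        · rintro ⟨h1, h2, h3⟩
          refine ⟨add_mem hx1 h1, add_mem hx2 h2, ?_⟩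
          have e : x₀.1 + p.1 + (x₀.2 + p.2) = (x₀.1 + x₀.2) + (p.1 + p.2) := by abel
          rw [e, hxs, h3, add_zero]
        · rintro ⟨h1, h2, h3⟩
          have e1 : p.1 = (x₀.1 + p.1) - x₀.1 := by abel
          have e2 : p.2 = (x₀.2 + p.2) - x₀.2 := by abel
          refine ⟨e1 ▸ sub_mem h1 hx1, e2 ▸ sub_mem h2 hx2, ?_⟩
          have e : p.1 + p.2 = (x₀.1 + p.1 + (x₀.2 + p.2)) - (x₀.1 + x₀.2) := by abel
          rw [e, h3, hxs, sub_self]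
      · intro p hp
        obtain ⟨h1, h2, _⟩ := (mem_fibF G₁ G₂).mp hp
        rw [show (Equiv.addLeft x₀) p = x₀ + p from rfl,
          symPair_add_left G₁ G₂ F hF1 hF2 hx1 hx2 h1 h2 hy1 hy2]
        push_cast
        ring
    rw [reix, ← Finset.mul_sum, char_sum G₁ G₂ F hF1 hF2 hy1 hy2]
    split_ifs with h
    · ring
    · simp
  rw [Finset.sum_congr rfl step1, ← Finset.sum_filter]
  rw [Finset.mul_sum]
  refine Finset.sum_congr ?_ (fun _ _ => rfl)
  ext y
  rw [Finset.mem_filter, radF_eq, and_comm]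

lemma sum_f_eq [DecidablePred (· ∈ G₁)] [DecidablePred (· ∈ G₂)]
    (D : ℕ) (f : G → G → ℂ)
    (hf : ∀ μ ν : G, f μ ν =
      if μ ∈ G₁ ∧ ν ∈ G₂ then ((D : ℂ))⁻¹ * (F μ ν : ℂ) else 0)
    (μ ν : G) :
    (∑ μ' : G, ∑ ν' : G, f (μ - μ') (ν - ν') * f ν' μ') =
      (((D : ℂ) ^ 2)⁻¹) *
        ∑ x ∈ fibF G₁ G₂ μ, ∑ y ∈ fibF G₁ G₂ ν, (SymPair F x y : ℂ) := by
  classical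
  have L : (∑ μ' : G, ∑ ν' : G, f (μ - μ') (ν - ν') * f ν' μ')
      = ∑ p : G × G, f (μ - p.1) (ν - p.2) * f p.2 p.1 :=
    (Fintype.sum_prod_type' (f := fun a b => f (μ - a) (ν - b) * f b a)).symm
  rw [L]
  set T : Finset (G × G) := univ.filter
    (fun p => ((μ - p.1) ∈ G₁ ∧ (ν - p.2) ∈ G₂) ∧ (p.2 ∈ G₁ ∧ p.1 ∈ G₂)) with hT
  have h1 : (∑ p : G × G, f (μ - p.1) (ν - p.2) * f p.2 p.1)
      = ∑ p ∈ T, f (μ - p.1) (ν - p.2) * f p.2 p.1 := by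
    refine (Finset.sum_subset (Finset.subset_univ T) ?_).symm
    intro p _ hp
    rw [hf, hf]
    by_cases hA : (μ - p.1) ∈ G₁ ∧ (ν - p.2) ∈ G₂
    · have hB : ¬(p.2 ∈ G₁ ∧ p.1 ∈ G₂) := fun hB =>
        hp (Finset.mem_filter.mpr ⟨Finset.mem_univ _, hA, hB⟩)
      rw [if_neg hB, mul_zero]
    · rw [if_neg hA, zero_mul]
  rw [h1]
  have h2 : (∑ p ∈ T, f (μ - p.1) (ν - p.2) * f p.2 p.1)
      = ∑ q ∈ (fibF G₁ G₂ μ) ×ˢ (fibF G₁ G₂ ν),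
          ((D : ℂ) ^ 2)⁻¹ * (SymPair F q.1 q.2 : ℂ) := by
    refine Finset.sum_nbij' (fun p => ((μ - p.1, p.1), (p.2, ν - p.2)))
      (fun q => (q.1.2, q.2.1)) ?_ ?_ ?_ ?_ ?_
    · intro p hp
      obtain ⟨-, hA, hB⟩ := Finset.mem_filter.mp hp
      refine Finset.mem_product.mpr ⟨(mem_fibF G₁ G₂).mpr
        ⟨hA.1, hB.2, by show μ - p.1 + p.1 = μ; abel⟩,
        (mem_fibF G₁ G₂).mpr ⟨hB.1, hA.2, by show p.2 + (ν - p.2) = ν; abel⟩⟩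
    · intro q hq
      obtain ⟨hq1, hq2⟩ := Finset.mem_product.mp hq
      obtain ⟨ha1, ha2, ha3⟩ := (mem_fibF G₁ G₂).mp hq1
      obtain ⟨hb1, hb2, hb3⟩ := (mem_fibF G₁ G₂).mp hq2
      refine Finset.mem_filter.mpr ⟨Finset.mem_univ _, ⟨?_, ?_⟩, hb1, ha2⟩
      · have e : μ - q.1.2 = q.1.1 := by rw [← ha3]; abel
        rw [e]; exact ha1
      · have e : ν - q.2.1 = q.2.2 := by rw [← hb3]; abel
        rw [e]; exact hb2
    · intro p _; rfl
    · intro q hq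
      obtain ⟨hq1, hq2⟩ := Finset.mem_product.mp hq
      obtain ⟨-, -, ha3⟩ := (mem_fibF G₁ G₂).mp hq1
      obtain ⟨-, -, hb3⟩ := (mem_fibF G₁ G₂).mp hq2
      have e1 : μ - q.1.2 = q.1.1 := by rw [← ha3]; abel
      have e2 : ν - q.2.1 = q.2.2 := by rw [← hb3]; abel
      exact Prod.ext (Prod.ext e1 rfl) (Prod.ext rfl e2)
    · intro p hp
      obtain ⟨-, hA, hB⟩ := Finset.mem_filter.mp hp
      rw [hf, hf, if_pos hA, if_pos hB]
      show _ = ((D : ℂ) ^ 2)⁻¹ *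
        ((F (μ - p.1) (ν - p.2) * F p.2 p.1 : ℂˣ) : ℂ)
      push_cast
      ring
  rw [h2, Finset.sum_product, Finset.mul_sum]
  refine Finset.sum_congr rfl fun x _ => ?_
  rw [Finset.mul_sum]

lemma card_fib0 :
    ((fibF G₁ G₂ (0:G)).card) = Nat.card ↥(G₁ ⊓ G₂) := by
  rw [← Nat.card_eq_finsetCard]
  exact Nat.card_congr
    { toFun := fun p => ⟨p.1.1, by
        obtain ⟨h1, h2, h3⟩ := (mem_fibF G₁ G₂).mp p.2
        have e : p.1.1 = -p.1.2 := eq_neg_of_add_eq_zero_left h3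
        exact AddSubgroup.mem_inf.mpr ⟨h1, e ▸ neg_mem h2⟩⟩
      invFun := fun x => ⟨(x.1, -x.1), by
        obtain ⟨h1, h2⟩ := AddSubgroup.mem_inf.mp x.2
        exact (mem_fibF G₁ G₂).mpr ⟨h1, neg_mem h2, by
          show x.1 + -x.1 = 0; abel⟩⟩
      left_inv := fun p => by
        obtain ⟨-, -, h3⟩ := (mem_fibF G₁ G₂).mp p.2
        exact Subtype.ext (Prod.ext rfl (neg_eq_of_add_eq_zero_right h3))
      right_inv := fun x => rfl }

lemma card_rad0 :
    ((radF G₁ G₂ F (0:G)).card)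
      = Nat.card ↥(radSet G₁ G₂ F ∩ fiberSet G₁ G₂ (0:G)) := by
  have hset : (radSet G₁ G₂ F ∩ fiberSet G₁ G₂ (0:G))
      = (↑(radF G₁ G₂ F (0:G)) : Set (G × G)) := by
    ext p
    rw [Finset.mem_coe, mem_radF]
  rw [hset, Nat.card_coe_set_eq, Set.ncard_coe_finset]

lemma card_radF
    (hF1 : ∀ μ μ' ν : G, μ ∈ G₁ → μ' ∈ G₁ → ν ∈ G₂ → F (μ + μ') ν = F μ ν * F μ' ν)
    (hF2 : ∀ μ ν ν' : G, μ ∈ G₁ → ν ∈ G₂ → ν' ∈ G₂ → F μ (ν + ν') = F μ ν * F μ ν')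
    {ν : G} {νt : G × G} (hνt : νt ∈ radF G₁ G₂ F ν) :
    (radF G₁ G₂ F ν).card = (radF G₁ G₂ F (0:G)).card := by
  obtain ⟨hνf, hνr⟩ := (radF_eq G₁ G₂ F).mp hνt
  obtain ⟨hν1, hν2, hνs⟩ := (mem_fibF G₁ G₂).mp hνf
  refine Finset.card_nbij' (fun y => y - νt) (fun y => νt + y) ?_ ?_ ?_ ?_
  · intro y hy
    obtain ⟨hyf, hyr⟩ := (radF_eq G₁ G₂ F).mp hy
    obtain ⟨hy1, hy2, hys⟩ := (mem_fibF G₁ G₂).mp hyf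
    refine (radF_eq G₁ G₂ F).mpr ⟨(mem_fibF G₁ G₂).mpr
      ⟨sub_mem hy1 hν1, sub_mem hy2 hν2, ?_⟩, ?_⟩
    · show y.1 - νt.1 + (y.2 - νt.2) = 0
      have e : y.1 - νt.1 + (y.2 - νt.2) = (y.1 + y.2) - (νt.1 + νt.2) := by abel
      rw [e, hys, hνs, sub_self]
    · intro q hq
      obtain ⟨hq1, hq2, -⟩ := (mem_fibF G₁ G₂).mp hq
      have e : y = νt + (y - νt) := by abel
      have hd : SymPair F q y = SymPair F q νt * SymPair F q (y - νt) := by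
        conv_lhs => rw [e]
        exact symPair_add_right G₁ G₂ F hF1 hF2 hq1 hq2 hν1 hν2
          (sub_mem hy1 hν1) (sub_mem hy2 hν2)
      have h1 := hyr q hq
      have h2 := hνr q hq
      rw [h1, h2, one_mul] at hd
      exact hd.symm
  · intro y hy
    obtain ⟨hyf, hyr⟩ := (radF_eq G₁ G₂ F).mp hy
    obtain ⟨hy1, hy2, hys⟩ := (mem_fibF G₁ G₂).mp hyf
    refine (radF_eq G₁ G₂ F).mpr ⟨(mem_fibF G₁ G₂).mpr
      ⟨add_mem hν1 hy1, add_mem hν2 hy2, ?_⟩, ?_⟩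
    · show νt.1 + y.1 + (νt.2 + y.2) = ν
      have e : νt.1 + y.1 + (νt.2 + y.2) = (νt.1 + νt.2) + (y.1 + y.2) := by abel
      rw [e, hys, hνs, add_zero]
    · intro q hq
      obtain ⟨hq1, hq2, -⟩ := (mem_fibF G₁ G₂).mp hq
      rw [symPair_add_right G₁ G₂ F hF1 hF2 hq1 hq2 hν1 hν2 hy1 hy2,
        hyr q hq, hνr q hq, one_mul]
  · intro y _; show νt + (y - νt) = y; abel
  · intro y _; show νt + y - νt = y; abel

end Aux

/-- closed formula for the monodromy matrix entries
`m(μ,ν) = Σ_{μ',ν'} f(μ−μ',ν−ν')·f(ν',μ')`: they equal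
`(|G₁∩G₂|·|Rad₀|/D²)·Sym(F)(μ̃,ν̃)` for any `μ̃ ∈ Rad_μ`, `ν̃ ∈ Rad_ν` when both
are nonempty, and `0` otherwise. -/
theorem stmt14 {G : Type*} [AddCommGroup G] [Fintype G] [DecidableEq G]
    (G₁ G₂ : AddSubgroup G) [DecidablePred (· ∈ G₁)] [DecidablePred (· ∈ G₂)]
    (D : ℕ) (hD1 : Nat.card G₁ = D) (hD2 : Nat.card G₂ = D)
    (hsum : G₁ ⊔ G₂ = ⊤)
    (F : G → G → ℂˣ)
    (hF1 : ∀ μ μ' ν : G, μ ∈ G₁ → μ' ∈ G₁ → ν ∈ G₂ →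
      F (μ + μ') ν = F μ ν * F μ' ν)
    (hF2 : ∀ μ ν ν' : G, μ ∈ G₁ → ν ∈ G₂ → ν' ∈ G₂ →
      F μ (ν + ν') = F μ ν * F μ ν')
    (hperfL : ∀ μ ∈ G₁, (∀ ν ∈ G₂, F μ ν = 1) → μ = 0)
    (hperfR : ∀ ν ∈ G₂, (∀ μ ∈ G₁, F μ ν = 1) → ν = 0)
    (f : G → G → ℂ)
    (hf : ∀ μ ν : G, f μ ν =
      if μ ∈ G₁ ∧ ν ∈ G₂ then ((D : ℂ))⁻¹ * (F μ ν : ℂ) else 0) :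
    ∀ μ ν : G,
      (∀ μt ∈ radSet G₁ G₂ F ∩ fiberSet G₁ G₂ μ,
       ∀ νt ∈ radSet G₁ G₂ F ∩ fiberSet G₁ G₂ ν,
        (∑ μ' : G, ∑ ν' : G, f (μ - μ') (ν - ν') * f ν' μ')
          = ((Nat.card ↥(G₁ ⊓ G₂) : ℂ) *
              (Nat.card ↥(radSet G₁ G₂ F ∩ fiberSet G₁ G₂ (0 : G)) : ℂ) /
              (D : ℂ) ^ 2) * (SymPair F μt νt : ℂ)) ∧
      ((radSet G₁ G₂ F ∩ fiberSet G₁ G₂ μ = ∅ ∨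
        radSet G₁ G₂ F ∩ fiberSet G₁ G₂ ν = ∅) →
        (∑ μ' : G, ∑ ν' : G, f (μ - μ') (ν - ν') * f ν' μ') = 0) := by
  intro μ ν
  classical
  have hex : ∀ lam : G, ∃ x, x ∈ fibF G₁ G₂ lam := by
    intro lam
    have h : lam ∈ G₁ ⊔ G₂ := by rw [hsum]; trivial
    obtain ⟨a, ha, b, hb, hab⟩ := AddSubgroup.mem_sup.mp h
    exact ⟨(a, b), (mem_fibF G₁ G₂).mpr ⟨ha, hb, hab⟩⟩
  constructor
  · intro μt hμt νt hνt
    have hμt' : μt ∈ radF G₁ G₂ F μ := (mem_radF G₁ G₂ F).mpr hμt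
    have hνt' : νt ∈ radF G₁ G₂ F ν := (mem_radF G₁ G₂ F).mpr hνt
    have hμfib : μt ∈ fibF G₁ G₂ μ := ((radF_eq G₁ G₂ F).mp hμt').1
    obtain ⟨hμ1, hμ2, hμs⟩ := (mem_fibF G₁ G₂).mp hμfib
    obtain ⟨hν1, hν2, hνs⟩ := (mem_fibF G₁ G₂).mp ((radF_eq G₁ G₂ F).mp hνt').1
    have hμrad : ∀ q ∈ fiberSet G₁ G₂ (0 : G), SymPair F μt q = 1 := hμt.1.2.2
    rw [sum_f_eq G₁ G₂ F D f hf μ ν, total_eq G₁ G₂ F hF1 hF2 ν hμfib]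
    have hconst : ∀ y ∈ radF G₁ G₂ F ν,
        (SymPair F μt y : ℂ) = (SymPair F μt νt : ℂ) := by
      intro y hy
      obtain ⟨hyf, hyr⟩ := (radF_eq G₁ G₂ F).mp hy
      obtain ⟨hy1, hy2, hys⟩ := (mem_fibF G₁ G₂).mp hyf
      have hfib0 : (y - νt) ∈ fiberSet G₁ G₂ (0 : G) := by
        refine ⟨sub_mem hy1 hν1, sub_mem hy2 hν2, ?_⟩
        show y.1 - νt.1 + (y.2 - νt.2) = 0
        have e : y.1 - νt.1 + (y.2 - νt.2) = (y.1 + y.2) - (νt.1 + νt.2) := by abel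
        rw [e, hys, hνs, sub_self]
      have : SymPair F μt y = SymPair F μt νt := by
        conv_lhs => rw [show y = νt + (y - νt) by abel]
        rw [symPair_add_right G₁ G₂ F hF1 hF2 hμ1 hμ2 hν1 hν2
          (sub_mem hy1 hν1) (sub_mem hy2 hν2), hμrad _ hfib0, mul_one]
      rw [this]
    rw [Finset.sum_congr rfl hconst, Finset.sum_const, nsmul_eq_mul,
      card_radF G₁ G₂ F hF1 hF2 hνt', card_fib0, card_rad0]
    ring
  · intro hemp
    rw [sum_f_eq G₁ G₂ F D f hf μ ν]
    rcases hemp with h | h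
    · obtain ⟨y₀, hy₀⟩ := hex ν
      have hswap : (∑ x ∈ fibF G₁ G₂ μ, ∑ y ∈ fibF G₁ G₂ ν, (SymPair F x y : ℂ))
          = ∑ x ∈ fibF G₁ G₂ ν, ∑ y ∈ fibF G₁ G₂ μ, (SymPair F x y : ℂ) := by
        rw [Finset.sum_comm]
        exact Finset.sum_congr rfl fun y _ =>
          Finset.sum_congr rfl fun x _ => by rw [symPair_comm]
      have hrade : radF G₁ G₂ F μ = ∅ := by
        rw [Finset.eq_empty_iff_forall_notMem]
        intro p hp
        have hm := (mem_radF G₁ G₂ F).mp hp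
        rw [h] at hm
        exact hm
      rw [hswap, total_eq G₁ G₂ F hF1 hF2 μ hy₀, hrade, Finset.sum_empty,
        mul_zero, mul_zero]
    · obtain ⟨x₀, hx₀⟩ := hex μ
      have hrade : radF G₁ G₂ F ν = ∅ := by
        rw [Finset.eq_empty_iff_forall_notMem]
        intro p hp
        have hm := (mem_radF G₁ G₂ F).mp hp
        rw [h] at hm
        exact hm
      rw [total_eq G₁ G₂ F hF1 hF2 ν hx₀, hrade, Finset.sum_empty,
        mul_zero, mul_zero]
end

section
/- Let G be a finite abelian group with subgroups G₁, G₂ ≤ G, and let F: G₁ × G₂ → ℂˣ be a perfect pairing. Define Sym(F)((μ₁,μ₂),(ν₁,ν₂)) = F(μ₁,ν₂)·F(ν₁,μ₂), let (G₁×G₂)₀ := {(ν₁,ν₂) ∈ G₁ × G₂ : ν₁ + ν₂ = 0 in G}, and let Rad := {x ∈ G₁ × G₂ : Sym(F)(x,y) = 1 for all y ∈ (G₁×G₂)₀}. Then Rad is isomorphic, as an abelian group, to the subgroup G₁ + G₂ of G. -/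
open AddSubgroup

/-- Any finite additive abelian group is (noncanonically) isomorphic to its
`ℂˣ`-valued dual. -/
lemma dual_equiv_self (B : Type*) [AddCommGroup B] [Finite B] :
    Nonempty ((B →+ Additive ℂˣ) ≃+ B) := by
  haveI : NeZero ((Monoid.exponent (Multiplicative B) : ℕ) : ℂ) :=
    ⟨by exact_mod_cast Monoid.exponent_ne_zero_of_finite⟩
  obtain ⟨e⟩ := CommGroup.monoidHom_mulEquiv_of_hasEnoughRootsOfUnity (Multiplicative B) ℂ
  refine ⟨{ toFun := fun f => (e (AddMonoidHom.toMultiplicativeLeft f)).toAdd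
            invFun := fun b => AddMonoidHom.toMultiplicativeLeft.symm
              (e.symm (Multiplicative.ofAdd b))
            left_inv := fun f => by simp
            right_inv := fun b => by simp
            map_add' := fun f g => ?_ }⟩
  have h : AddMonoidHom.toMultiplicativeLeft (f + g) =
      AddMonoidHom.toMultiplicativeLeft f * AddMonoidHom.toMultiplicativeLeft g := by
    ext x; rfl
  simp [h]

/-- The annihilator of a subgroup inside the dual. -/
def annih {B : Type*} [AddCommGroup B] (H : AddSubgroup B) :
    AddSubgroup (B →+ Additive ℂˣ) where
  carrier := {f | ∀ x ∈ H, f x = 0}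
  zero_mem' := fun x _ => rfl
  add_mem' := by
    intro f g hf hg x hx
    simp [AddMonoidHom.add_apply, hf x hx, hg x hx]
  neg_mem' := by
    intro f hf x hx
    simp [hf x hx]

/-- The dual of the quotient is the annihilator. -/
noncomputable def annihEquiv {B : Type*} [AddCommGroup B] (H : AddSubgroup B) :
    ((B ⧸ H) →+ Additive ℂˣ) ≃+ annih H where
  toFun g := ⟨g.comp (QuotientAddGroup.mk' H), fun x hx => by
    simpa using congrArg g ((QuotientAddGroup.eq_zero_iff x).mpr hx)⟩
  invFun f := QuotientAddGroup.lift H f.1 (fun x hx => f.2 x hx)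
  left_inv g := by ext x; rfl
  right_inv f := by ext x; rfl
  map_add' g h := rfl

section helpers

variable {G : Type*} [AddCommGroup G] (G₁ G₂ : AddSubgroup G) (F : G → G → ℂˣ)

/-- The symmetrization of `F`, as a homomorphism to the dual. -/
def symHom
    (hF1 : ∀ μ μ' ν : G, μ ∈ G₁ → μ' ∈ G₁ → ν ∈ G₂ →
      F (μ + μ') ν = F μ ν * F μ' ν)
    (hF2 : ∀ μ ν ν' : G, μ ∈ G₁ → ν ∈ G₂ → ν' ∈ G₂ →
      F μ (ν + ν') = F μ ν * F μ ν') :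
    ↥(G₁.prod G₂) →+ (↥(G₁.prod G₂) →+ Additive ℂˣ) :=
  AddMonoidHom.mk' (fun p =>
    AddMonoidHom.mk' (fun q => Additive.ofMul (F p.1.1 q.1.2 * F q.1.1 p.1.2))
      (by
        intro q r
        obtain ⟨hp1, hp2⟩ := AddSubgroup.mem_prod.mp p.2
        obtain ⟨hq1, hq2⟩ := AddSubgroup.mem_prod.mp q.2
        obtain ⟨hr1, hr2⟩ := AddSubgroup.mem_prod.mp r.2
        have : F p.1.1 (q.1.2 + r.1.2) * F (q.1.1 + r.1.1) p.1.2 =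
            (F p.1.1 q.1.2 * F q.1.1 p.1.2) * (F p.1.1 r.1.2 * F r.1.1 p.1.2) := by
          rw [hF2 _ _ _ hp1 hq2 hr2, hF1 _ _ _ hq1 hr1 hp2]
          exact mul_mul_mul_comm _ _ _ _
        show Additive.ofMul (F p.1.1 (q.1.2 + r.1.2) * F (q.1.1 + r.1.1) p.1.2) = _
        rw [this]; rfl))
    (by
      intro p p'
      ext1 q
      obtain ⟨hp1, hp2⟩ := AddSubgroup.mem_prod.mp p.2
      obtain ⟨hp1', hp2'⟩ := AddSubgroup.mem_prod.mp p'.2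
      obtain ⟨hq1, hq2⟩ := AddSubgroup.mem_prod.mp q.2
      have : F (p.1.1 + p'.1.1) q.1.2 * F q.1.1 (p.1.2 + p'.1.2) =
          (F p.1.1 q.1.2 * F q.1.1 p.1.2) * (F p'.1.1 q.1.2 * F q.1.1 p'.1.2) := by
        rw [hF1 _ _ _ hp1 hp1' hq2, hF2 _ _ _ hq1 hp2 hp2']
        exact mul_mul_mul_comm _ _ _ _
      show Additive.ofMul (F (p.1.1 + p'.1.1) q.1.2 * F q.1.1 (p.1.2 + p'.1.2)) = _
      rw [this]; rfl)

/-- The sum homomorphism `G₁ × G₂ → G`. -/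
def sumHom : ↥(G₁.prod G₂) →+ G :=
  AddMonoidHom.mk' (fun p => p.1.1 + p.1.2) (fun p q => add_add_add_comm _ _ _ _)

end helpers


/-- Pulling back a subgroup along an isomorphism and pushing forward along an
injective homomorphism preserves the isomorphism type. -/
noncomputable def mapComapEquiv {B B' D : Type*} [AddCommGroup B] [AddCommGroup B']
    [AddCommGroup D] (e : B ≃+ B') (f : B →+ D) (hf : Function.Injective f)
    (H : AddSubgroup B') :
    ↥((AddSubgroup.comap e.toAddMonoidHom H).map f) ≃+ ↥H :=
  ((AddSubgroup.comap e.toAddMonoidHom H).equivMapOfInjective f hf).symm.trans <|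
    (AddEquiv.addSubgroupCongr (AddSubgroup.comap_equiv_eq_map_symm' e H)).trans
      (e.symm.addSubgroupMap H).symm

set_option maxHeartbeats 1000000 in
/-- the radical `Rad` of the symmetrization `Sym(F)` of a perfect
pairing `F : G₁ × G₂ → ℂˣ` against the fiber over `0` is a subgroup of
`G₁ × G₂` isomorphic, as an abelian group, to `G₁ + G₂ ≤ G`. -/
theorem stmt16 {G : Type*} [AddCommGroup G] [Finite G]
    (G₁ G₂ : AddSubgroup G)
    (F : G → G → ℂˣ)
    (hF1 : ∀ μ μ' ν : G, μ ∈ G₁ → μ' ∈ G₁ → ν ∈ G₂ →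
      F (μ + μ') ν = F μ ν * F μ' ν)
    (hF2 : ∀ μ ν ν' : G, μ ∈ G₁ → ν ∈ G₂ → ν' ∈ G₂ →
      F μ (ν + ν') = F μ ν * F μ ν')
    (hperfL : ∀ μ ∈ G₁, (∀ ν ∈ G₂, F μ ν = 1) → μ = 0)
    (hperfR : ∀ ν ∈ G₂, (∀ μ ∈ G₁, F μ ν = 1) → ν = 0) :
    ∃ R : AddSubgroup (G × G),
      (R : Set (G × G)) =
        {p | p.1 ∈ G₁ ∧ p.2 ∈ G₂ ∧
          ∀ q : G × G, q.1 ∈ G₁ → q.2 ∈ G₂ → q.1 + q.2 = 0 →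
            F p.1 q.2 * F q.1 p.2 = 1} ∧
      Nonempty (R ≃+ ↥(G₁ ⊔ G₂)) := by
  classical
  have memA : ∀ p : G × G, p ∈ G₁.prod G₂ ↔ p.1 ∈ G₁ ∧ p.2 ∈ G₂ :=
    fun p => AddSubgroup.mem_prod
  -- basic consequences of bilinearity
  have hQ10 : ∀ μ ∈ G₁, F μ 0 = 1 := by
    intro μ hμ
    have := hF2 μ 0 0 hμ G₂.zero_mem G₂.zero_mem
    rw [add_zero] at this
    exact (left_eq_mul.mp this)
  have hQ01 : ∀ ν ∈ G₂, F 0 ν = 1 := by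
    intro ν hν
    have := hF1 0 0 ν G₁.zero_mem G₁.zero_mem hν
    rw [add_zero] at this
    exact (left_eq_mul.mp this)
  -- S is injective
  have hSinj : Function.Injective (symHom G₁ G₂ F hF1 hF2) := by
    rw [injective_iff_map_eq_zero]
    intro a ha
    obtain ⟨ha1, ha2⟩ := (memA a.1).mp a.2
    have key : ∀ q : ↥(G₁.prod G₂), F a.1.1 q.1.2 * F q.1.1 a.1.2 = 1 := by
      intro q
      have := congrFun (congrArg DFunLike.coe ha) q
      exact Additive.toMul.injective this
    have h1 : a.1.1 = 0 := by
      refine hperfL _ ha1 (fun ν hν => ?_)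
      have := key ⟨(0, ν), (memA _).mpr ⟨G₁.zero_mem, hν⟩⟩
      simpa [hQ01 _ ha2] using this
    have h2 : a.1.2 = 0 := by
      refine hperfR _ ha2 (fun μ hμ => ?_)
      have := key ⟨(μ, 0), (memA _).mpr ⟨hμ, G₂.zero_mem⟩⟩
      simpa [hQ10 _ ha1] using this
    ext
    · exact h1
    · exact h2
  -- cardinalities, bijectivity
  obtain ⟨dA⟩ := dual_equiv_self ↥(G₁.prod G₂)
  haveI : Finite (↥(G₁.prod G₂) →+ Additive ℂˣ) := Finite.of_equiv _ dA.symm.toEquiv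
  have hSbij : Function.Bijective (symHom G₁ G₂ F hF1 hF2) :=
    (Nat.bijective_iff_injective_and_card _).mpr ⟨hSinj, Nat.card_congr dA.symm.toEquiv⟩
  obtain ⟨e, he⟩ : ∃ e : ↥(G₁.prod G₂) ≃+ (↥(G₁.prod G₂) →+ Additive ℂˣ),
      ∀ a, e.toAddMonoidHom a = symHom G₁ G₂ F hF1 hF2 a :=
    ⟨AddEquiv.ofBijective _ hSbij, fun _ => rfl⟩
  have hrange : (sumHom G₁ G₂).range = G₁ ⊔ G₂ := by
    apply le_antisymm
    · rintro x ⟨p, rfl⟩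
      obtain ⟨h1, h2⟩ := (memA p.1).mp p.2
      exact add_mem (le_sup_left (α := AddSubgroup G) h1)
        (le_sup_right (α := AddSubgroup G) h2)
    · refine sup_le (fun x hx => ⟨⟨(x, 0), (memA _).mpr ⟨hx, G₂.zero_mem⟩⟩, by
        show x + 0 = x; simp⟩)
        (fun x hx => ⟨⟨(0, x), (memA _).mpr ⟨G₁.zero_mem, hx⟩⟩, by
        show 0 + x = x; simp⟩)
  have hmemker : ∀ x : ↥(G₁.prod G₂),
      x ∈ (sumHom G₁ G₂).ker ↔ x.1.1 + x.1.2 = 0 := by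
    intro x; exact AddMonoidHom.mem_ker
  -- the radical subgroup
  refine ⟨(AddSubgroup.comap e.toAddMonoidHom (annih (sumHom G₁ G₂).ker)).map
      (G₁.prod G₂).subtype, ?_, ?_⟩
  · ext p
    simp only [AddSubgroup.coe_map, Set.mem_image, SetLike.mem_coe, AddSubgroup.mem_comap,
      Set.mem_setOf_eq]
    constructor
    · rintro ⟨a, ha, rfl⟩
      obtain ⟨h1, h2⟩ := (memA a.1).mp a.2
      refine ⟨h1, h2, fun q hq1 hq2 hq0 => ?_⟩
      have hq : (⟨q, (memA q).mpr ⟨hq1, hq2⟩⟩ : ↥(G₁.prod G₂)) ∈ (sumHom G₁ G₂).ker :=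
        (hmemker _).mpr hq0
      have h := ha _ hq
      rw [he a] at h
      exact Additive.toMul.injective h
    · rintro ⟨h1, h2, h3⟩
      refine ⟨⟨p, (memA p).mpr ⟨h1, h2⟩⟩, fun x hx => ?_, rfl⟩
      have hx0 : x.1.1 + x.1.2 = 0 := (hmemker _).mp hx
      obtain ⟨hx1, hx2⟩ := (memA x.1).mp x.2
      have := h3 x.1 hx1 hx2 hx0
      rw [he]
      show Additive.ofMul (F p.1 x.1.2 * F x.1.1 p.2) = 0
      rw [this]; rfl
  · haveI : Finite (↥(G₁.prod G₂) ⧸ (sumHom G₁ G₂).ker) :=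
      Finite.of_surjective _ (QuotientAddGroup.mk'_surjective _)
    obtain ⟨E4⟩ := dual_equiv_self (↥(G₁.prod G₂) ⧸ (sumHom G₁ G₂).ker)
    have W12 := mapComapEquiv e (G₁.prod G₂).subtype (G₁.prod G₂).subtype_injective
      (annih (sumHom G₁ G₂).ker)
    have W3 : ↥(annih (sumHom G₁ G₂).ker) ≃+
        ((↥(G₁.prod G₂) ⧸ (sumHom G₁ G₂).ker) →+ Additive ℂˣ) :=
      (annihEquiv (sumHom G₁ G₂).ker).symm
    have W5 : (↥(G₁.prod G₂) ⧸ (sumHom G₁ G₂).ker) ≃+ ↥((sumHom G₁ G₂).range) :=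
      QuotientAddGroup.quotientKerEquivRange _
    have W6 : ↥((sumHom G₁ G₂).range) ≃+ ↥(G₁ ⊔ G₂) := AddEquiv.addSubgroupCongr hrange
    exact ⟨W12.trans <| W3.trans <| E4.trans <| W5.trans W6⟩
end

section
/- Let n ≥ 1, let P be an n × n integer matrix with det P = ±1, let S = diag(d₁,…,dₙ) with positive integers dᵢ, set A := P·S·Pᵀ, and let ℓ ≥ 1 be an integer. Then 2ℓ·A·ℤⁿ ⊆ 2·ℤⁿ ∩ ℓ·A·ℤⁿ, and the quotient group (2·ℤⁿ ∩ ℓ·A·ℤⁿ)/(2ℓ·A·ℤⁿ) is isomorphic to the direct product ∏ᵢ₌₁ⁿ ℤ/gcd(2, ℓ·dᵢ)ℤ. In particular this quotient is trivial if and only if ℓ·dᵢ is odd for all i. -/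
/-- The image lattice `M·ℤⁿ ⊆ ℤⁿ` of an integer matrix, as an additive
subgroup. -/
def imageLatZ {n : ℕ} (M : Matrix (Fin n) (Fin n) ℤ) :
    AddSubgroup (Fin n → ℤ) :=
  AddMonoidHom.range (Matrix.mulVecLin M).toAddMonoidHom

section Aux

open Matrix

variable {n : ℕ}

lemma mem_imageLatZ {M : Matrix (Fin n) (Fin n) ℤ} {x : Fin n → ℤ} :
    x ∈ imageLatZ M ↔ ∃ y, M *ᵥ y = x := by
  simp [imageLatZ]

lemma dvd_mulVec {k : ℤ} {Q : Matrix (Fin n) (Fin n) ℤ} {x : Fin n → ℤ}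
    (h : ∀ i, k ∣ x i) (i : Fin n) : k ∣ (Q *ᵥ x) i := by
  simp only [Matrix.mulVec, dotProduct]
  exact Finset.dvd_sum fun j _ => (h j).mul_left _

lemma mem_two_one {x : Fin n → ℤ} :
    x ∈ imageLatZ ((2 : ℤ) • (1 : Matrix (Fin n) (Fin n) ℤ)) ↔ ∀ i, (2 : ℤ) ∣ x i := by
  rw [mem_imageLatZ]
  constructor
  · rintro ⟨y, rfl⟩ i
    simp only [Matrix.smul_mulVec, Matrix.one_mulVec, Pi.smul_apply, smul_eq_mul]
    exact ⟨y i, rfl⟩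
  · intro h
    refine ⟨fun i => x i / 2, ?_⟩
    funext i
    simp only [Matrix.smul_mulVec, Matrix.one_mulVec, Pi.smul_apply, smul_eq_mul]
    exact Int.mul_ediv_cancel' (h i)

lemma mem_smul_A (P : Matrix (Fin n) (Fin n) ℤ) (hPu : IsUnit P.det)
    (d : Fin n → ℕ) (c : ℤ) (x : Fin n → ℤ) :
    x ∈ imageLatZ (c • (P * Matrix.diagonal (fun i => (d i : ℤ)) * P.transpose)) ↔
      ∀ i, c * (d i : ℤ) ∣ (P⁻¹ *ᵥ x) i := by
  have hQP : P⁻¹ * P = 1 := Matrix.nonsing_inv_mul P hPu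
  have hPQ : P * P⁻¹ = 1 := Matrix.mul_nonsing_inv P hPu
  have hPtu : IsUnit P.transpose.det := by rwa [Matrix.det_transpose]
  rw [mem_imageLatZ]
  constructor
  · rintro ⟨y, rfl⟩ i
    have key : P⁻¹ *ᵥ ((c • (P * Matrix.diagonal (fun i => (d i : ℤ)) * P.transpose)) *ᵥ y)
        = c • (Matrix.diagonal (fun i => (d i : ℤ)) *ᵥ (P.transpose *ᵥ y)) := by
      rw [Matrix.smul_mulVec, Matrix.mulVec_smul, Matrix.mulVec_mulVec,
        ← Matrix.mul_assoc, ← Matrix.mul_assoc, hQP, Matrix.one_mul,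
        ← Matrix.mulVec_mulVec]
    rw [key]
    simp only [Pi.smul_apply, smul_eq_mul, Matrix.mulVec_diagonal]
    exact ⟨(P.transpose *ᵥ y) i, by ring⟩
  · intro h
    set z : Fin n → ℤ := P⁻¹ *ᵥ x with hz
    set u : Fin n → ℤ := fun i => z i / (c * (d i : ℤ)) with hu
    have hzu : ∀ i, c * (d i : ℤ) * u i = z i := fun i => Int.mul_ediv_cancel' (h i)
    refine ⟨P.transpose⁻¹ *ᵥ u, ?_⟩
    have hPt : P.transpose *ᵥ (P.transpose⁻¹ *ᵥ u) = u := by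
      rw [Matrix.mulVec_mulVec, Matrix.mul_nonsing_inv _ hPtu, Matrix.one_mulVec]
    have hx : P *ᵥ z = x := by
      rw [hz, Matrix.mulVec_mulVec, hPQ, Matrix.one_mulVec]
    rw [Matrix.smul_mulVec, ← Matrix.mulVec_mulVec, ← Matrix.mulVec_mulVec, hPt,
      ← hx, ← Matrix.mulVec_smul]
    have hsu : c • ((Matrix.diagonal fun i => (d i : ℤ)) *ᵥ u) = z := by
      funext i
      simp only [Pi.smul_apply, smul_eq_mul, Matrix.mulVec_diagonal]
      rw [← hzu i]; ring
    rw [hsu]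

end Aux

open Matrix in
/-- for `A = P S Pᵀ` with `P` unimodular and `S = diag(d₁,…,dₙ)`,
`dᵢ > 0`, one has `2ℓ·A·ℤⁿ ⊆ 2·ℤⁿ ∩ ℓ·A·ℤⁿ`, the quotient is isomorphic to
`∏ᵢ ℤ/gcd(2,ℓ·dᵢ)ℤ`, and in particular it is trivial iff all `ℓ·dᵢ` are odd. -/
theorem stmt18 {n : ℕ} (hn : 1 ≤ n)
    (P : Matrix (Fin n) (Fin n) ℤ) (hP : P.det = 1 ∨ P.det = -1)
    (d : Fin n → ℕ) (hd : ∀ i, 0 < d i)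
    (ℓ : ℕ) (hℓ : 1 ≤ ℓ)
    (A : Matrix (Fin n) (Fin n) ℤ)
    (hA : A = P * Matrix.diagonal (fun i => (d i : ℤ)) * P.transpose) :
    imageLatZ (((2 * ℓ : ℕ) : ℤ) • A)
        ≤ imageLatZ ((2 : ℤ) • (1 : Matrix (Fin n) (Fin n) ℤ))
            ⊓ imageLatZ ((ℓ : ℤ) • A) ∧
    Nonempty
      ((↥(imageLatZ ((2 : ℤ) • (1 : Matrix (Fin n) (Fin n) ℤ))
            ⊓ imageLatZ ((ℓ : ℤ) • A)) ⧸
          (imageLatZ (((2 * ℓ : ℕ) : ℤ) • A)).addSubgroupOf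
            (imageLatZ ((2 : ℤ) • (1 : Matrix (Fin n) (Fin n) ℤ))
              ⊓ imageLatZ ((ℓ : ℤ) • A)))
        ≃+ (∀ i : Fin n, ZMod (Nat.gcd 2 (ℓ * d i)))) ∧
    ((imageLatZ (((2 * ℓ : ℕ) : ℤ) • A)
        = imageLatZ ((2 : ℤ) • (1 : Matrix (Fin n) (Fin n) ℤ))
            ⊓ imageLatZ ((ℓ : ℤ) • A)) ↔ ∀ i, Odd (ℓ * d i)) := by
  subst hA
  have hPu : IsUnit P.det := Int.isUnit_iff.mpr hP
  have hQP : P⁻¹ * P = 1 := Matrix.nonsing_inv_mul P hPu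
  have hPQ : P * P⁻¹ = 1 := Matrix.mul_nonsing_inv P hPu
  have hPP : ∀ v : Fin n → ℤ, P⁻¹ *ᵥ (P *ᵥ v) = v := fun v => by
    rw [Matrix.mulVec_mulVec, hQP, Matrix.one_mulVec]
  have memA := mem_smul_A P hPu d
  set g : Fin n → ℕ := fun i => Nat.gcd 2 (ℓ * d i) with hg
  set L : Fin n → ℕ := fun i => Nat.lcm 2 (ℓ * d i) with hL
  set K := imageLatZ ((2 : ℤ) • (1 : Matrix (Fin n) (Fin n) ℤ))
      ⊓ imageLatZ ((ℓ : ℤ) • (P * Matrix.diagonal (fun i => (d i : ℤ)) * P.transpose))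
      with hK
  have hld : ∀ i, 0 < ℓ * d i := fun i => Nat.mul_pos hℓ (hd i)
  have hgL : ∀ i, g i * L i = 2 * (ℓ * d i) := fun i => Nat.gcd_mul_lcm 2 (ℓ * d i)
  have hLpos : ∀ i, 0 < L i := fun i => Nat.lcm_pos (by norm_num) (hld i)
  have hLne : ∀ i, ((L i : ℤ)) ≠ 0 := fun i => by exact_mod_cast (hLpos i).ne'
  have h2L : ∀ i, (2 : ℤ) ∣ (L i : ℤ) := fun i => by
    exact_mod_cast Int.natCast_dvd_natCast.mpr (Nat.dvd_lcm_left 2 (ℓ * d i))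
  have hdL : ∀ i, (ℓ : ℤ) * (d i : ℤ) ∣ (L i : ℤ) := fun i => by
    have := Int.natCast_dvd_natCast.mpr (Nat.dvd_lcm_right 2 (ℓ * d i))
    push_cast at this
    exact this
  have hc : ∀ i, ((2 * ℓ : ℕ) : ℤ) * (d i : ℤ) = (g i : ℤ) * (L i : ℤ) := fun i => by
    have h1 : ((g i : ℤ)) * (L i : ℤ) = 2 * ((ℓ : ℤ) * (d i : ℤ)) := by
      exact_mod_cast hgL i
    rw [h1]; push_cast; ring
  -- membership characterization of K
  have memK : ∀ x : Fin n → ℤ, x ∈ K ↔ ∀ i, (L i : ℤ) ∣ (P⁻¹ *ᵥ x) i := by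
    intro x
    rw [hK, AddSubgroup.mem_inf, mem_two_one, memA]
    constructor
    · rintro ⟨h2, hA⟩ i
      have h2' : (2 : ℤ) ∣ (P⁻¹ *ᵥ x) i := dvd_mulVec h2 i
      have := Int.dvd_natAbs.mp (Int.natCast_dvd_natCast.mpr (Int.lcm_dvd (Int.dvd_natAbs.mpr h2') (Int.dvd_natAbs.mpr (hA i))))
      have hlcm : Int.lcm 2 ((ℓ : ℤ) * (d i : ℤ)) = L i := by
        have : (ℓ : ℤ) * (d i : ℤ) = ((ℓ * d i : ℕ) : ℤ) := by push_cast; ring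
        rw [this]
        simp [Int.lcm, hL, Int.natAbs_mul]
      rwa [hlcm] at this
    · intro h
      constructor
      · intro i
        have h2z : ∀ j, (2 : ℤ) ∣ (P⁻¹ *ᵥ x) j := fun j => (h2L j).trans (h j)
        have := dvd_mulVec (Q := P) h2z i
        rwa [Matrix.mulVec_mulVec, hPQ, Matrix.one_mulVec] at this
      · intro i
        exact (hdL i).trans (h i)
  -- membership characterization of the 2ℓA lattice
  have mem2l : ∀ x : Fin n → ℤ,
      x ∈ imageLatZ (((2 * ℓ : ℕ) : ℤ) •
          (P * Matrix.diagonal (fun i => (d i : ℤ)) * P.transpose))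
        ↔ ∀ i, (g i : ℤ) * (L i : ℤ) ∣ (P⁻¹ *ᵥ x) i := by
    intro x
    rw [memA]
    constructor
    · intro h i; rw [← hc i]; exact h i
    · intro h i; rw [hc i]; exact h i
  -- Part 1 : inclusion
  have part1 : imageLatZ (((2 * ℓ : ℕ) : ℤ) •
      (P * Matrix.diagonal (fun i => (d i : ℤ)) * P.transpose)) ≤ K := by
    intro x hx
    rw [mem2l] at hx
    rw [memK]
    intro i
    exact (dvd_mul_left (L i : ℤ) (g i : ℤ)).trans (hx i)
  refine ⟨part1, ?_, ?_⟩
  -- Part 2 : the quotient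
  · have hdivadd : ∀ (a b : ℤ) (i : Fin n), (L i : ℤ) ∣ a → (L i : ℤ) ∣ b →
        (a + b) / (L i : ℤ) = a / (L i : ℤ) + b / (L i : ℤ) := by
      rintro a b i ⟨u, rfl⟩ ⟨v, rfl⟩
      rw [← mul_add, Int.mul_ediv_cancel_left _ (hLne i),
        Int.mul_ediv_cancel_left _ (hLne i), Int.mul_ediv_cancel_left _ (hLne i)]
    let ψ : K →+ (∀ i, ZMod (g i)) :=
      { toFun := fun x i => (((P⁻¹ *ᵥ (x : Fin n → ℤ)) i / (L i : ℤ) : ℤ) : ZMod (g i))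
        map_zero' := by
          funext i
          simp
        map_add' := by
          intro x y
          funext i
          have hx := (memK _).mp x.2 i
          have hy := (memK _).mp y.2 i
          simp only [AddSubgroup.coe_add, Matrix.mulVec_add, Pi.add_apply]
          rw [hdivadd _ _ i hx hy]
          push_cast
          rfl }
    have hsurj : Function.Surjective ψ := by
      intro t
      choose c hcc using fun i => ZMod.intCast_surjective (t i)
      set zz : Fin n → ℤ := fun i => c i * (L i : ℤ) with hzz
      have hmem : P *ᵥ zz ∈ K := by
        rw [memK]
        intro i
        rw [hPP]
        exact ⟨c i, mul_comm (c i) ((L i : ℤ))⟩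
      refine ⟨⟨P *ᵥ zz, hmem⟩, ?_⟩
      funext i
      show (((P⁻¹ *ᵥ (P *ᵥ zz)) i / (L i : ℤ) : ℤ) : ZMod (g i)) = t i
      rw [hPP]
      show (((c i * (L i : ℤ)) / (L i : ℤ) : ℤ) : ZMod (g i)) = t i
      rw [Int.mul_ediv_cancel _ (hLne i), hcc i]
    have hker : ψ.ker = (imageLatZ (((2 * ℓ : ℕ) : ℤ) •
        (P * Matrix.diagonal (fun i => (d i : ℤ)) * P.transpose))).addSubgroupOf K := by
      ext x
      rw [AddMonoidHom.mem_ker, AddSubgroup.mem_addSubgroupOf, mem2l, funext_iff]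
      constructor
      · intro h i
        have h0 := h i
        rw [Pi.zero_apply] at h0
        have h0' : (g i : ℤ) ∣ (P⁻¹ *ᵥ (x : Fin n → ℤ)) i / (L i : ℤ) :=
          (ZMod.intCast_zmod_eq_zero_iff_dvd _ _).mp h0
        obtain ⟨u, hu⟩ := (memK _).mp x.2 i
        rw [hu, Int.mul_ediv_cancel_left _ (hLne i)] at h0'
        obtain ⟨w, hw⟩ := h0'
        exact ⟨w, by rw [hu, hw]; ring⟩
      · intro h i
        obtain ⟨u, hu⟩ := (memK _).mp x.2 i
        obtain ⟨w, hw⟩ := h i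
        show (((P⁻¹ *ᵥ (x : Fin n → ℤ)) i / (L i : ℤ) : ℤ) : ZMod (g i))
            = (0 : ∀ j, ZMod (g j)) i
        rw [Pi.zero_apply, ZMod.intCast_zmod_eq_zero_iff_dvd, hu,
          Int.mul_ediv_cancel_left _ (hLne i)]
        refine ⟨w, mul_left_cancel₀ (hLne i) ?_⟩
        rw [← hu, hw]; ring
    exact ⟨hker ▸ QuotientAddGroup.quotientKerEquivOfSurjective ψ hsurj⟩
  -- Part 3 : equality iff all ℓ·dᵢ odd
  · constructor
    · intro heq i
      set zz : Fin n → ℤ := fun j => (L j : ℤ) with hzz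
      have hmem : P *ᵥ zz ∈ K := by
        rw [memK]; intro j; rw [hPP]
      rw [← heq, mem2l] at hmem
      have hdvd := hmem i
      rw [hPP] at hdvd
      by_contra hodd
      have h2dvd : 2 ∣ ℓ * d i := (Nat.not_odd_iff_even.mp hodd).two_dvd
      have hg2 : g i = 2 := Nat.gcd_eq_left h2dvd
      have hLeq : L i = ℓ * d i := by
        have := hgL i; rw [hg2] at this; omega
      have hdvdn : g i * L i ∣ L i := by
        have : ((g i * L i : ℕ) : ℤ) ∣ ((L i : ℕ) : ℤ) := by push_cast; exact hdvd
        exact_mod_cast this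
      have hle := Nat.le_of_dvd (hLpos i) hdvdn
      rw [hg2, hLeq] at hle
      have := hld i
      omega
    · intro hodd
      refine le_antisymm part1 ?_
      intro x hx
      rw [hK, AddSubgroup.mem_inf, mem_two_one, memA] at hx
      rw [memA]
      intro i
      have h2 : (2 : ℤ) ∣ (P⁻¹ *ᵥ x) i := dvd_mulVec hx.1 i
      have hd' : (ℓ : ℤ) * (d i : ℤ) ∣ (P⁻¹ *ᵥ x) i := hx.2 i
      have hcop : IsCoprime (2 : ℤ) ((ℓ : ℤ) * (d i : ℤ)) := by
        rw [Int.isCoprime_iff_gcd_eq_one]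
        have h1 : Nat.gcd 2 (ℓ * d i) = 1 := Nat.coprime_two_left.mpr (hodd i)
        have h2' : (ℓ : ℤ) * (d i : ℤ) = ((ℓ * d i : ℕ) : ℤ) := by push_cast; ring
        have hgc : Int.gcd 2 ((ℓ * d i : ℕ) : ℤ) = Nat.gcd 2 (ℓ * d i) := by
          simp [Int.gcd, Int.natAbs_mul]
        rw [h2', hgc]
        exact h1
      have hmul := hcop.mul_dvd h2 hd'
      rw [show ((2 * ℓ : ℕ) : ℤ) * (d i : ℤ) = 2 * ((ℓ : ℤ) * (d i : ℤ)) by push_cast; ring]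
      exact hmul
end
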